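/- Let 𝒫_sup ⊂ ℝ^p be compact with positive Lebesgue measure, 𝒯_sup = [0,T], and u : 𝒫_sup × 𝒯_sup → ℝ^{N_h} continuous. Fix N ≤ N_h. For each n ∈ ℕ, draw μ_1, …, μ_n i.i.d. uniformly on 𝒫_sup, set t_k = kT/n for k = 1,…,n, and let V_n ∈ ℝ^{N_h×N} be a semi-orthogonal minimizer of the empirical error (|𝒫_sup × 𝒯_sup|/n²) Σ_{j=1}^{n} Σ_{k=1}^{n} ‖u(μ_j, t_k) − W Wᵀ u(μ_j, t_k)‖² over semi-orthogonal W, with minimum value denoted Σ_{k>N} σ_k²(n). Let Σ_{k>N} σ_{k,∞}² be the minimum of ∫_{𝒫_sup × 𝒯_sup} ‖u(z) − W Wᵀ u(z)‖² dz over semi-orthogonal W. Then Σ_{k>N} σ_k²(n) → Σ_{k>N} σ_{k,∞}² almost surely as n → ∞. -/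

import Mathlib

open Matrix MeasureTheory Filter ProbabilityTheory Topology

/-- Identification of a plain tuple in `ℝ^n` with an element of `EuclideanSpace ℝ (Fin n)`,
so that `‖·‖` denotes the Euclidean norm. -/
def toEuc {n : ℕ} (x : Fin n → ℝ) : EuclideanSpace ℝ (Fin n) := WithLp.toLp 2 x

/-- The empirical mean squared POD projection error
`(|P × [0,T]|/n²) ∑_{j=1}^{n} ∑_{k=1}^{n} ‖u(μ_j, kT/n) − W Wᵀ u(μ_j, kT/n)‖²`
associated with sampled parameters `μs 0, …, μs (n-1)`, the equispaced time grid
`t_k = kT/n`, and a matrix `W`. -/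
noncomputable def empiricalPODError {p Nh N : ℕ} (P : Set (Fin p → ℝ)) (T : ℝ)
    (u : (Fin p → ℝ) × ℝ → EuclideanSpace ℝ (Fin Nh))
    (μs : ℕ → (Fin p → ℝ)) (n : ℕ) (W : Matrix (Fin Nh) (Fin N) ℝ) : ℝ :=
  ((volume (P ×ˢ Set.Icc 0 T)).toReal / (n * n : ℝ)) *
    ∑ j ∈ Finset.range n, ∑ k ∈ Finset.range n,
      ‖u (μs j, ((k : ℝ) + 1) * T / n)
        - toEuc (W.mulVec (Wᵀ.mulVec (u (μs j, ((k : ℝ) + 1) * T / n))))‖ ^ 2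

/-- The continuous mean squared POD projection error
`∫_{P × [0,T]} ‖u(z) − W Wᵀ u(z)‖² dz` associated with a matrix `W`. -/
noncomputable def continuousPODError {p Nh N : ℕ} (P : Set (Fin p → ℝ)) (T : ℝ)
    (u : (Fin p → ℝ) × ℝ → EuclideanSpace ℝ (Fin Nh))
    (W : Matrix (Fin Nh) (Fin N) ℝ) : ℝ :=
  ∫ z in P ×ˢ Set.Icc 0 T, ‖u z - toEuc (W.mulVec (Wᵀ.mulVec (u z)))‖ ^ 2

/-! ### Auxiliary lemmas -/

lemma toEuc_normsq {n : ℕ} (x : Fin n → ℝ) : ‖toEuc x‖ ^ 2 = ∑ i, x i ^ 2 := by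
  rw [EuclideanSpace.norm_eq, Real.sq_sqrt (by positivity)]
  simp [toEuc, sq]

lemma proj_normsq {Nh N : ℕ} (W : Matrix (Fin Nh) (Fin N) ℝ) (hW : Wᵀ * W = 1)
    (x : Fin Nh → ℝ) :
    ‖toEuc x - toEuc (W.mulVec (Wᵀ.mulVec (toEuc x)))‖ ^ 2
      = (∑ a, x a ^ 2) - ∑ a, ∑ b, (W * Wᵀ) a b * (x a * x b) := by
  have h1 : toEuc x - toEuc (W.mulVec (Wᵀ.mulVec (toEuc x)))
      = toEuc (x - (W * Wᵀ).mulVec x) := by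
    simp [toEuc, Matrix.mulVec_mulVec]
  rw [h1, toEuc_normsq]
  have hP : (W * Wᵀ) * (W * Wᵀ) = W * Wᵀ := by
    rw [Matrix.mul_assoc, ← Matrix.mul_assoc Wᵀ W Wᵀ, hW, Matrix.one_mul]
  set P := W * Wᵀ with hPdef
  have hPsymm : Pᵀ = P := by simp [hPdef, Matrix.transpose_mul]
  have hyy : (P.mulVec x) ⬝ᵥ (P.mulVec x) = x ⬝ᵥ (P.mulVec x) := by
    rw [Matrix.dotProduct_mulVec]
    have : (P.mulVec x) ᵥ* P = P.mulVec x := by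
      rw [← hPsymm, Matrix.vecMul_transpose, hPsymm, Matrix.mulVec_mulVec, hP]
    rw [this, dotProduct_comm]
  have expand : ∑ a, (x - P.mulVec x) a ^ 2
      = (x - P.mulVec x) ⬝ᵥ (x - P.mulVec x) := by
    simp [dotProduct, sq]
  rw [expand, sub_dotProduct, dotProduct_sub, dotProduct_sub, hyy,
    dotProduct_comm (P.mulVec x) x]
  have hxx : x ⬝ᵥ x = ∑ a, x a ^ 2 := by simp [dotProduct, sq]
  have hxy : x ⬝ᵥ (P.mulVec x) = ∑ a, ∑ b, P a b * (x a * x b) := by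
    simp only [dotProduct, Matrix.mulVec, Finset.mul_sum]
    exact Finset.sum_congr rfl fun a _ => Finset.sum_congr rfl fun b _ => by ring
  rw [hxx, hxy]; ring

lemma proj_entry_le {Nh N : ℕ} (W : Matrix (Fin Nh) (Fin N) ℝ) (hW : Wᵀ * W = 1)
    (a b : Fin Nh) : |(W * Wᵀ) a b| ≤ 1 := by
  have hP : (W * Wᵀ) * (W * Wᵀ) = W * Wᵀ := by
    rw [Matrix.mul_assoc, ← Matrix.mul_assoc Wᵀ W Wᵀ, hW, Matrix.one_mul]
  set P := W * Wᵀ with hPdef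
  have hPsymm : Pᵀ = P := by simp [hPdef, Matrix.transpose_mul]
  have hdiag : ∀ c : Fin Nh, P c c = ∑ d, P c d ^ 2 := by
    intro c
    have := congrFun (congrFun hP c) c
    simp only [Matrix.mul_apply] at this
    rw [← this]
    refine (Finset.sum_congr rfl fun d _ => ?_).symm
    have h2 : P d c = P c d :=
      (Matrix.transpose_apply P c d).symm.trans (congrFun (congrFun hPsymm c) d)
    rw [h2, sq]
  have hPaa1 : ∀ c, P c c ≤ 1 := by
    intro c
    have h0 : 0 ≤ P c c := by rw [hdiag c]; positivity
    have hsq : P c c ^ 2 ≤ P c c := by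
      conv_rhs => rw [hdiag c]
      exact Finset.single_le_sum (f := fun d => P c d ^ 2) (fun d _ => sq_nonneg _)
        (Finset.mem_univ c)
    nlinarith
  have h1 : P a b ^ 2 ≤ P a a := by
    rw [hdiag a]
    exact Finset.single_le_sum (f := fun d => P a d ^ 2) (fun d _ => sq_nonneg _)
      (Finset.mem_univ b)
  have h3 := le_trans h1 (hPaa1 a)
  nlinarith [abs_nonneg (P a b), sq_abs (P a b)]

lemma riemann_unif {X : Type*} [MetricSpace X] (P : Set X) (hP : IsCompact P)
    (T : ℝ) (hT : 0 < T) (φ : X × ℝ → ℝ) (hφ : Continuous φ)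
    (ε : ℝ) (hε : 0 < ε) :
    ∃ n₀ : ℕ, 0 < n₀ ∧ ∀ n, n₀ ≤ n → ∀ μ' ∈ P,
      |(1 / (n : ℝ)) * ∑ k ∈ Finset.range n, φ (μ', ((k : ℝ) + 1) * T / n)
        - T⁻¹ * ∫ t in Set.Icc 0 T, φ (μ', t)| ≤ ε := by
  have hK : IsCompact (P ×ˢ Set.Icc 0 T) := hP.prod isCompact_Icc
  have hUC : UniformContinuousOn φ (P ×ˢ Set.Icc 0 T) :=
    hK.uniformContinuousOn_of_continuous hφ.continuousOn
  rw [Metric.uniformContinuousOn_iff] at hUC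
  obtain ⟨δ, hδ, hδ'⟩ := hUC ε hε
  obtain ⟨n₀, hn₀⟩ := exists_nat_gt (T / δ)
  refine ⟨n₀ + 1, Nat.succ_pos _, fun n hn μ' hμ' => ?_⟩
  have hnpos : 0 < (n : ℝ) := by
    have : 0 < n := lt_of_lt_of_le (Nat.succ_pos _) hn
    exact_mod_cast this
  have hTn : T / n < δ := by
    rw [div_lt_iff₀ hnpos]
    have h1 : T / δ < n := lt_of_lt_of_le hn₀ (by exact_mod_cast le_trans (Nat.le_succ _) hn)
    have h2 : T < (n : ℝ) * δ := (div_lt_iff₀ hδ).mp h1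
    nlinarith
  set a : ℕ → ℝ := fun k => (k : ℝ) * T / n with ha
  have hint : ∀ k, IntervalIntegrable (fun t => φ (μ', t)) volume (a k) (a (k + 1)) :=
    fun k => (hφ.comp (continuous_const.prodMk continuous_id)).intervalIntegrable _ _
  have hsplit : ∑ k ∈ Finset.range n, ∫ t in a k..a (k + 1), φ (μ', t)
      = ∫ t in (a 0)..(a n), φ (μ', t) :=
    intervalIntegral.sum_integral_adjacent_intervals (fun k _ => hint k)
  have ha0 : a 0 = 0 := by simp [ha]
  have han : a n = T := by simp only [ha]; field_simp
  have hIcc : ∫ t in Set.Icc 0 T, φ (μ', t) = ∫ t in (a 0)..(a n), φ (μ', t) := by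
    rw [ha0, han, intervalIntegral.integral_of_le hT.le,
      ← MeasureTheory.integral_Icc_eq_integral_Ioc]
  rw [hIcc, ← hsplit]
  have hstep : ∀ k, a (k + 1) - a k = T / n := by
    intro k; simp only [ha]; push_cast; ring
  have hmono : ∀ k : ℕ, (k : ℝ) ≤ n → 0 ≤ a k ∧ a k ≤ T := by
    intro k hk
    constructor
    · show 0 ≤ (k : ℝ) * T / n
      positivity
    · show (k : ℝ) * T / n ≤ T
      rw [div_le_iff₀ hnpos]
      nlinarith [Nat.cast_nonneg (α := ℝ) k]
  have key : ∀ k ∈ Finset.range n,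
      |(1 / (n : ℝ)) * φ (μ', ((k : ℝ) + 1) * T / n) - T⁻¹ * ∫ t in a k..a (k + 1), φ (μ', t)|
        ≤ ε / n := by
    intro k hk
    rw [Finset.mem_range] at hk
    have hk1 : ((k : ℝ) + 1) ≤ n := by exact_mod_cast hk
    have hbk := hmono k (by linarith)
    have hbk1 : 0 ≤ a (k+1) ∧ a (k+1) ≤ T := hmono (k+1) (by push_cast; linarith)
    have hc : ((k : ℝ) + 1) * T / n = a (k + 1) := by
      show ((k : ℝ) + 1) * T / n = ((k + 1 : ℕ) : ℝ) * T / n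
      push_cast; ring
    have hle : a k ≤ a (k + 1) := by
      linarith [hstep k, (div_pos hT hnpos).le]
    have hconst : (1 / (n:ℝ)) * φ (μ', a (k+1)) = T⁻¹ * ∫ t in a k..a (k+1), φ (μ', a (k+1)) := by
      rw [intervalIntegral.integral_const, hstep k, smul_eq_mul]
      field_simp
    rw [hc, hconst, ← mul_sub, ← intervalIntegral.integral_sub (by
        exact intervalIntegrable_const) (hint k), abs_mul]
    have hbound : ‖∫ t in a k..a (k+1), (φ (μ', a (k+1)) - φ (μ', t))‖ ≤ ε * |a (k+1) - a k| := by
      apply intervalIntegral.norm_integral_le_of_norm_le_const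
      intro t ht
      rw [Set.uIoc_of_le hle] at ht
      have ht1 : 0 ≤ t := le_trans hbk.1 ht.1.le
      have ht2 : t ≤ T := le_trans ht.2 hbk1.2
      have hdist : dist (μ', a (k+1)) (μ', t) < δ := by
        rw [Prod.dist_eq]
        simp only [dist_self, Real.dist_eq]
        have h1 : |a (k+1) - t| < δ := by
          rw [abs_of_nonneg (by linarith [ht.2])]
          have : a (k+1) - t < a (k+1) - a k := by linarith [ht.1]
          rw [hstep k] at this; linarith
        simp [h1, hδ]
      have := hδ' (μ', a (k+1)) (Set.mk_mem_prod hμ' ⟨hbk1.1, hbk1.2⟩)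
        (μ', t) (Set.mk_mem_prod hμ' ⟨ht1, ht2⟩) hdist
      rw [Real.dist_eq] at this
      exact le_of_lt (by simpa [Real.norm_eq_abs] using this)
    rw [Real.norm_eq_abs] at hbound
    calc |T⁻¹| * |∫ t in a k..a (k+1), (φ (μ', a (k+1)) - φ (μ', t))|
        ≤ |T⁻¹| * (ε * |a (k+1) - a k|) := by
          exact mul_le_mul_of_nonneg_left hbound (abs_nonneg _)
    _ = ε / n := by
        rw [hstep k, abs_of_pos (inv_pos.mpr hT), abs_of_pos (div_pos hT hnpos)]
        field_simp
  calc |(1 / (n : ℝ)) * ∑ k ∈ Finset.range n, φ (μ', ((k : ℝ) + 1) * T / n)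
      - T⁻¹ * ∑ k ∈ Finset.range n, ∫ t in a k..a (k + 1), φ (μ', t)|
      = |∑ k ∈ Finset.range n, ((1 / (n : ℝ)) * φ (μ', ((k : ℝ) + 1) * T / n)
          - T⁻¹ * ∫ t in a k..a (k + 1), φ (μ', t))| := by
        rw [Finset.sum_sub_distrib, ← Finset.mul_sum, ← Finset.mul_sum]
  _ ≤ ∑ k ∈ Finset.range n, |(1 / (n : ℝ)) * φ (μ', ((k : ℝ) + 1) * T / n)
          - T⁻¹ * ∫ t in a k..a (k + 1), φ (μ', t)| := Finset.abs_sum_le_sum_abs _ _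
  _ ≤ ∑ k ∈ Finset.range n, (ε / n) := Finset.sum_le_sum key
  _ = ε := by
      rw [Finset.sum_const, Finset.card_range, nsmul_eq_mul]
      field_simp

lemma sum4_swap {α : Type*} [Fintype α] (n : ℕ) (F : α → α → ℕ → ℕ → ℝ) :
    ∑ j ∈ Finset.range n, ∑ k ∈ Finset.range n, ∑ a : α, ∑ b : α, F a b j k
      = ∑ a : α, ∑ b : α, ∑ j ∈ Finset.range n, ∑ k ∈ Finset.range n, F a b j k := by
  calc ∑ j ∈ Finset.range n, ∑ k ∈ Finset.range n, ∑ a : α, ∑ b : α, F a b j k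
      = ∑ j ∈ Finset.range n, ∑ a : α, ∑ k ∈ Finset.range n, ∑ b : α, F a b j k :=
        Finset.sum_congr rfl fun j _ => Finset.sum_comm
  _ = ∑ a : α, ∑ j ∈ Finset.range n, ∑ k ∈ Finset.range n, ∑ b : α, F a b j k :=
        Finset.sum_comm
  _ = ∑ a : α, ∑ j ∈ Finset.range n, ∑ b : α, ∑ k ∈ Finset.range n, F a b j k :=
        Finset.sum_congr rfl fun a _ => Finset.sum_congr rfl fun j _ => Finset.sum_comm
  _ = ∑ a : α, ∑ b : α, ∑ j ∈ Finset.range n, ∑ k ∈ Finset.range n, F a b j k :=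
        Finset.sum_congr rfl fun a _ => Finset.sum_comm

lemma samples_in {p : ℕ} (P : Set (Fin p → ℝ)) (hPmeas : MeasurableSet P)
    (hPpos : 0 < volume P) (hPfin : volume P < ⊤)
    {Ω : Type} [MeasureSpace Ω] [IsProbabilityMeasure (ℙ : Measure Ω)]
    (μ : ℕ → Ω → (Fin p → ℝ)) (hmeas : ∀ j, Measurable (μ j))
    (hunif : ∀ j, Measure.map (μ j) ℙ = (volume P)⁻¹ • volume.restrict P) :
    ∀ᵐ ω : Ω, ∀ j, μ j ω ∈ P := by
  rw [ae_all_iff]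
  intro j
  have h1 : Measure.map (μ j) ℙ P = 1 := by
    rw [hunif j]
    simp only [Measure.smul_apply, Measure.restrict_apply hPmeas, smul_eq_mul]
    rw [Set.inter_self]
    exact ENNReal.inv_mul_cancel hPpos.ne' hPfin.ne
  rw [Measure.map_apply (hmeas j) hPmeas] at h1
  rw [ae_iff]
  have h2 : ℙ (μ j ⁻¹' P)ᶜ = 0 := by
    rw [measure_compl (hmeas j hPmeas) (measure_ne_top _ _), h1, measure_univ]
    simp
  exact h2

lemma lemmaA {p : ℕ} (P : Set (Fin p → ℝ)) (hP : IsCompact P) (hPpos : 0 < volume P)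
    (T : ℝ) (hT : 0 < T)
    (φ : (Fin p → ℝ) × ℝ → ℝ) (hφ : Continuous φ)
    {Ω : Type} [MeasureSpace Ω] [IsProbabilityMeasure (ℙ : Measure Ω)]
    (μ : ℕ → Ω → (Fin p → ℝ))
    (hmeas : ∀ j, Measurable (μ j))
    (hindep : iIndepFun μ ℙ)
    (hunif : ∀ j, Measure.map (μ j) ℙ = (volume P)⁻¹ • volume.restrict P) :
    ∀ᵐ ω : Ω, Tendsto
      (fun n : ℕ => (1 / ((n : ℝ) * n)) * ∑ j ∈ Finset.range n, ∑ k ∈ Finset.range n,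
        φ (μ j ω, ((k : ℝ) + 1) * T / n)) atTop
      (𝓝 (((volume P).toReal * T)⁻¹ * ∫ z in P ×ˢ Set.Icc 0 T, φ z)) := by
  have hPfin : volume P < ⊤ := hP.measure_lt_top
  have hPmeas : MeasurableSet P := hP.isClosed.measurableSet
  have hPtoReal : 0 < (volume P).toReal := ENNReal.toReal_pos hPpos.ne' hPfin.ne
  set H : (Fin p → ℝ) → ℝ := fun μ' => T⁻¹ * ∫ t in Set.Icc 0 T, φ (μ', t) with hH
  have hHcont : Continuous H := by
    apply continuous_const.mul
    exact continuous_parametric_integral_of_continuous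
      (by exact hφ.comp (continuous_fst.prodMk continuous_snd)) isCompact_Icc
  have hHint : Integrable H ((volume P)⁻¹ • volume.restrict P) := by
    apply Integrable.smul_measure _ (by simp [hPpos.ne'])
    exact (hHcont.continuousOn.integrableOn_compact hP)
  set Y : ℕ → Ω → ℝ := fun j ω => H (μ j ω) with hY
  have hYmeas : ∀ j, Measurable (Y j) := fun j => hHcont.measurable.comp (hmeas j)
  have hYint : Integrable (Y 0) ℙ := by
    have := (integrable_map_measure hHcont.aestronglyMeasurable (hmeas 0).aemeasurable).mp
      (by rw [hunif 0]; exact hHint)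
    exact this
  have hYindep : Pairwise (Function.onFun (IndepFun · · ℙ) Y) := by
    intro i j hij
    exact (hindep.indepFun hij).comp hHcont.measurable hHcont.measurable
  have hYident : ∀ i, IdentDistrib (Y i) (Y 0) ℙ ℙ := by
    intro i
    have hid : IdentDistrib (μ i) (μ 0) ℙ ℙ :=
      ⟨(hmeas i).aemeasurable, (hmeas 0).aemeasurable, by rw [hunif i, hunif 0]⟩
    exact hid.comp hHcont.measurable
  have hIntK : IntegrableOn φ (P ×ˢ Set.Icc 0 T) volume :=
    hφ.continuousOn.integrableOn_compact (hP.prod isCompact_Icc)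
  have hEY : (∫ ω, Y 0 ω) = ((volume P).toReal * T)⁻¹ * ∫ z in P ×ˢ Set.Icc 0 T, φ z := by
    have h1 : (∫ ω, Y 0 ω) = ∫ x, H x ∂(Measure.map (μ 0) ℙ) := by
      rw [integral_map (hmeas 0).aemeasurable hHcont.aestronglyMeasurable]
    rw [h1, hunif 0, integral_smul_measure]
    have h2 : ∫ z in P ×ˢ Set.Icc 0 T, φ z = ∫ x in P, ∫ t in Set.Icc 0 T, φ (x, t) := by
      rw [Measure.volume_eq_prod] at hIntK ⊢
      exact setIntegral_prod φ hIntK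
    rw [h2, ENNReal.toReal_inv, smul_eq_mul, hH, integral_const_mul, mul_inv]
    ring
  have hSLLN := strong_law_ae Y hYint hYindep hYident
  have hinP : ∀ᵐ ω : Ω, ∀ j, μ j ω ∈ P :=
    samples_in P hPmeas hPpos hPfin μ hmeas hunif
  filter_upwards [hSLLN, hinP] with ω hω hωP
  set L := ((volume P).toReal * T)⁻¹ * ∫ z in P ×ˢ Set.Icc 0 T, φ z with hL
  rw [hEY] at hω
  set MC : ℕ → ℝ := fun n => (n : ℝ)⁻¹ * ∑ j ∈ Finset.range n, Y j ω with hMC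
  have hMCt : Tendsto MC atTop (𝓝 L) := by
    simpa [hMC, smul_eq_mul] using hω
  set A : ℕ → ℝ := fun n => (1 / ((n : ℝ) * n)) * ∑ j ∈ Finset.range n, ∑ k ∈ Finset.range n,
      φ (μ j ω, ((k : ℝ) + 1) * T / n) with hA
  have hdiff : Tendsto (fun n => A n - MC n) atTop (𝓝 0) := by
    rw [Metric.tendsto_atTop]
    intro ε hε
    obtain ⟨n₀, hn₀pos, hn₀⟩ := riemann_unif P hP T hT φ hφ (ε/2) (by linarith)
    refine ⟨n₀, fun n hn => ?_⟩
    have hnpos : 0 < n := lt_of_lt_of_le hn₀pos hn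
    have hnR : 0 < (n : ℝ) := by exact_mod_cast hnpos
    have hAn : A n = (n : ℝ)⁻¹ * ∑ j ∈ Finset.range n,
        ((1 / (n : ℝ)) * ∑ k ∈ Finset.range n, φ (μ j ω, ((k : ℝ) + 1) * T / n)) := by
      simp only [hA, Finset.mul_sum]
      exact Finset.sum_congr rfl fun j _ => Finset.sum_congr rfl fun k _ => by ring
    rw [Real.dist_eq, sub_zero, hAn, hMC, ← mul_sub, ← Finset.sum_sub_distrib, abs_mul]
    have hbound : |∑ j ∈ Finset.range n,
        ((1 / (n : ℝ)) * ∑ k ∈ Finset.range n, φ (μ j ω, ((k : ℝ) + 1) * T / n) - Y j ω)|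
        ≤ n * (ε/2) := by
      calc _ ≤ ∑ j ∈ Finset.range n, |(1 / (n : ℝ)) * ∑ k ∈ Finset.range n,
            φ (μ j ω, ((k : ℝ) + 1) * T / n) - Y j ω| := Finset.abs_sum_le_sum_abs _ _
      _ ≤ ∑ _j ∈ Finset.range n, (ε/2) := by
          refine Finset.sum_le_sum fun j _ => ?_
          exact hn₀ n hn (μ j ω) (hωP j)
      _ = n * (ε/2) := by rw [Finset.sum_const, Finset.card_range, nsmul_eq_mul]
    calc |(n : ℝ)⁻¹| * |∑ j ∈ Finset.range n,
        ((1 / (n : ℝ)) * ∑ k ∈ Finset.range n, φ (μ j ω, ((k : ℝ) + 1) * T / n) - Y j ω)|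
        ≤ |(n : ℝ)⁻¹| * (n * (ε/2)) := mul_le_mul_of_nonneg_left hbound (abs_nonneg _)
    _ = ε / 2 := by rw [abs_of_pos (inv_pos.mpr hnR)]; field_simp
    _ < ε := by linarith
  have hfin : Tendsto (fun n => (A n - MC n) + MC n) atTop (𝓝 (0 + L)) := hdiff.add hMCt
  simpa using hfin

/-- **Convergence of the optimal empirical POD error to the optimal continuous POD error.**
With parameters sampled i.i.d. uniformly on the compact set `P` and the equispaced time
grid on `[0,T]`, if `Vn n ω` minimizes the empirical error over semi-orthogonal matrices
(so that `empiricalPODError … (Vn n ω) = Σ_{k>N} σ_k²(n)`) and `Vinf` minimizes the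
continuous error over semi-orthogonal matrices (so that
`continuousPODError … Vinf = Σ_{k>N} σ_{k,∞}²`), then almost surely
`Σ_{k>N} σ_k²(n) → Σ_{k>N} σ_{k,∞}²` as `n → ∞`. -/
theorem empirical_pod_error_tendsto_continuous
    {p Nh N : ℕ} (hNle : N ≤ Nh)
    (P : Set (Fin p → ℝ)) (hP : IsCompact P) (hPpos : 0 < volume P)
    (T : ℝ) (hT : 0 < T)
    (u : (Fin p → ℝ) × ℝ → EuclideanSpace ℝ (Fin Nh))
    (hu : ContinuousOn u (P ×ˢ Set.Icc 0 T))
    {Ω : Type} [MeasureSpace Ω] [IsProbabilityMeasure (ℙ : Measure Ω)]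
    (μ : ℕ → Ω → (Fin p → ℝ))
    (hmeas : ∀ j, Measurable (μ j))
    (hindep : iIndepFun μ ℙ)
    (hunif : ∀ j, Measure.map (μ j) ℙ = (volume P)⁻¹ • volume.restrict P)
    (Vn : ℕ → Ω → Matrix (Fin Nh) (Fin N) ℝ)
    (hVn : ∀ n ω, (Vn n ω)ᵀ * Vn n ω = 1)
    (hVnmin : ∀ n ω, ∀ W : Matrix (Fin Nh) (Fin N) ℝ, Wᵀ * W = 1 →
      empiricalPODError P T u (fun j => μ j ω) n (Vn n ω)
        ≤ empiricalPODError P T u (fun j => μ j ω) n W)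
    (Vinf : Matrix (Fin Nh) (Fin N) ℝ)
    (hVinf : Vinfᵀ * Vinf = 1)
    (hVinfmin : ∀ W : Matrix (Fin Nh) (Fin N) ℝ, Wᵀ * W = 1 →
      continuousPODError P T u Vinf ≤ continuousPODError P T u W) :
    ∀ᵐ ω : Ω, Tendsto
      (fun n : ℕ => empiricalPODError P T u (fun j => μ j ω) n (Vn n ω))
      atTop (𝓝 (continuousPODError P T u Vinf)) := by
  classical
  set K := P ×ˢ Set.Icc 0 T with hK
  have hKc : IsCompact K := hP.prod isCompact_Icc
  have hKcl : IsClosed K := hP.isClosed.prod isClosed_Icc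
  have hKmeas : MeasurableSet K := hKcl.measurableSet
  have hPfin : volume P < ⊤ := hP.measure_lt_top
  have hPtoReal : 0 < (volume P).toReal := ENNReal.toReal_pos hPpos.ne' hPfin.ne
  -- extend u to a global continuous function g
  obtain ⟨g, hg⟩ := ContinuousMap.exists_restrict_eq (Y := EuclideanSpace ℝ (Fin Nh)) hKcl
    ⟨K.restrict u, hu.restrict⟩
  have hgz : ∀ z ∈ K, g z = u z := by
    intro z hz
    have := DFunLike.congr_fun hg (⟨z, hz⟩ : K)
    exact this
  have hcoord : ∀ a : Fin Nh, Continuous fun z => g z a := by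
    intro a
    exact (EuclideanSpace.proj a).continuous.comp g.continuous
  -- the scalar test functions
  set φ0 : (Fin p → ℝ) × ℝ → ℝ := fun z => ∑ a, (g z a) ^ 2 with hφ0def
  set φab : Fin Nh → Fin Nh → (Fin p → ℝ) × ℝ → ℝ := fun a b z => g z a * g z b with hφabdef
  have hφ0cont : Continuous φ0 := by
    apply continuous_finset_sum
    intro a _
    exact (hcoord a).pow 2
  have hφabcont : ∀ a b, Continuous (φab a b) := fun a b => (hcoord a).mul (hcoord b)
  -- the constant c
  set c : ℝ := (volume K).toReal with hcdef
  have hc : c = (volume P).toReal * T := by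
    rw [hcdef, hK, Measure.volume_eq_prod, Measure.prod_prod, Real.volume_Icc, sub_zero,
      ENNReal.toReal_mul, ENNReal.toReal_ofReal hT.le]
  have hcpos : 0 < c := by rw [hc]; positivity
  -- limits
  set I0 : ℝ := ∫ z in K, φ0 z with hI0
  set Iab : Fin Nh → Fin Nh → ℝ := fun a b => ∫ z in K, φab a b z with hIab
  -- almost sure events
  have h0 := lemmaA P hP hPpos T hT φ0 hφ0cont μ hmeas hindep hunif
  have hab : ∀ᵐ ω : Ω, ∀ a b : Fin Nh, Tendsto
      (fun n : ℕ => (1 / ((n : ℝ) * n)) * ∑ j ∈ Finset.range n, ∑ k ∈ Finset.range n,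
        φab a b (μ j ω, ((k : ℝ) + 1) * T / n)) atTop
      (𝓝 (((volume P).toReal * T)⁻¹ * ∫ z in K, φab a b z)) := by
    rw [ae_all_iff]
    intro a
    rw [ae_all_iff]
    intro b
    exact lemmaA P hP hPpos T hT (φab a b) (hφabcont a b) μ hmeas hindep hunif
  have hinP : ∀ᵐ ω : Ω, ∀ j, μ j ω ∈ P :=
    samples_in P hP.isClosed.measurableSet hPpos hPfin μ hmeas hunif
  filter_upwards [h0, hab, hinP] with ω hω0 hωab hωP
  -- empirical sums
  set S : ((Fin p → ℝ) × ℝ → ℝ) → ℕ → ℝ := fun φ n =>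
    c / ((n : ℝ) * n) * ∑ j ∈ Finset.range n, ∑ k ∈ Finset.range n,
      φ (μ j ω, ((k : ℝ) + 1) * T / n) with hSdef
  have hSS : ∀ (φ : (Fin p → ℝ) × ℝ → ℝ) n, S φ n
      = c * ((1 / ((n : ℝ) * n)) * ∑ j ∈ Finset.range n, ∑ k ∈ Finset.range n,
          φ (μ j ω, ((k : ℝ) + 1) * T / n)) := by
    intro φ n; rw [hSdef]; ring
  have hlim : ∀ (φ : (Fin p → ℝ) × ℝ → ℝ),
      Tendsto (fun n : ℕ => (1 / ((n : ℝ) * n)) * ∑ j ∈ Finset.range n, ∑ k ∈ Finset.range n,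
        φ (μ j ω, ((k : ℝ) + 1) * T / n)) atTop
        (𝓝 (((volume P).toReal * T)⁻¹ * ∫ z in K, φ z)) →
      Tendsto (S φ) atTop (𝓝 (∫ z in K, φ z)) := by
    intro φ hφt
    have := hφt.const_mul c
    have heq : c * (((volume P).toReal * T)⁻¹ * ∫ z in K, φ z) = ∫ z in K, φ z := by
      rw [← hc]
      field_simp
    rw [heq] at this
    refine Tendsto.congr (fun n => (hSS φ n).symm) this
  have hS0 : Tendsto (S φ0) atTop (𝓝 I0) := hlim φ0 hω0
  have hSab : ∀ a b, Tendsto (S (φab a b)) atTop (𝓝 (Iab a b)) :=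
    fun a b => hlim (φab a b) (hωab a b)
  -- error sequence
  set E : ℕ → ℝ := fun n => |S φ0 n - I0| + ∑ a, ∑ b, |S (φab a b) n - Iab a b| with hE
  have hE0 : Tendsto E atTop (𝓝 0) := by
    have t1 : Tendsto (fun n => |S φ0 n - I0|) atTop (𝓝 0) := by
      have := (hS0.sub (tendsto_const_nhds (x := I0))).abs
      simpa using this
    have t2 : Tendsto (fun n => ∑ a : Fin Nh, ∑ b : Fin Nh, |S (φab a b) n - Iab a b|)
        atTop (𝓝 0) := by
      have : Tendsto (fun n => ∑ a : Fin Nh, ∑ b : Fin Nh, |S (φab a b) n - Iab a b|)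
          atTop (𝓝 (∑ a : Fin Nh, ∑ b : Fin Nh, (0 : ℝ))) := by
        refine tendsto_finset_sum _ fun a _ => ?_
        refine tendsto_finset_sum _ fun b _ => ?_
        have := ((hSab a b).sub (tendsto_const_nhds (x := Iab a b))).abs
        simpa using this
      simpa using this
    have := t1.add t2
    simpa using this
  -- membership of the sample points
  have hzK : ∀ n, ∀ j ∈ Finset.range n, ∀ k ∈ Finset.range n,
      (μ j ω, ((k : ℝ) + 1) * T / n) ∈ K := by
    intro n j _ k hk
    rw [Finset.mem_range] at hk
    have hnpos : 0 < (n : ℝ) := by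
      have : 0 < n := by omega
      exact_mod_cast this
    refine Set.mk_mem_prod (hωP j) ⟨by positivity, ?_⟩
    rw [div_le_iff₀ hnpos]
    have : ((k : ℝ) + 1) ≤ n := by exact_mod_cast hk
    nlinarith
  -- rewriting the empirical error
  have hemp : ∀ (n : ℕ) (W : Matrix (Fin Nh) (Fin N) ℝ), Wᵀ * W = 1 →
      empiricalPODError P T u (fun j => μ j ω) n W
        = S φ0 n - ∑ a, ∑ b, (W * Wᵀ) a b * S (φab a b) n := by
    intro n W hW
    have hterm : ∀ j ∈ Finset.range n, ∀ k ∈ Finset.range n,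
        ‖u (μ j ω, ((k : ℝ) + 1) * T / n)
          - toEuc (W.mulVec (Wᵀ.mulVec (u (μ j ω, ((k : ℝ) + 1) * T / n))))‖ ^ 2
        = φ0 (μ j ω, ((k : ℝ) + 1) * T / n)
          - ∑ a, ∑ b, (W * Wᵀ) a b * φab a b (μ j ω, ((k : ℝ) + 1) * T / n) := by
      intro j hj k hk
      have hz := hzK n j hj k hk
      rw [← hgz _ hz]
      exact proj_normsq W hW (g (μ j ω, ((k : ℝ) + 1) * T / n))
    unfold empiricalPODError
    rw [Finset.sum_congr rfl fun j hj => Finset.sum_congr rfl fun k hk => hterm j hj k hk]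
    have hsplit : ∑ j ∈ Finset.range n, ∑ k ∈ Finset.range n,
        (φ0 (μ j ω, ((k : ℝ) + 1) * T / n)
          - ∑ a, ∑ b, (W * Wᵀ) a b * φab a b (μ j ω, ((k : ℝ) + 1) * T / n))
        = (∑ j ∈ Finset.range n, ∑ k ∈ Finset.range n, φ0 (μ j ω, ((k : ℝ) + 1) * T / n))
          - ∑ a, ∑ b, (W * Wᵀ) a b * ∑ j ∈ Finset.range n, ∑ k ∈ Finset.range n,
              φab a b (μ j ω, ((k : ℝ) + 1) * T / n) := by
      simp only [Finset.sum_sub_distrib]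
      congr 1
      rw [sum4_swap n (fun a b j k => (W * Wᵀ) a b * φab a b (μ j ω, ((k : ℝ) + 1) * T / n))]
      refine Finset.sum_congr rfl fun a _ => Finset.sum_congr rfl fun b _ => ?_
      simp only [← Finset.mul_sum]
    rw [hsplit, ← hK, ← hcdef, mul_sub]
    simp only [hSdef]
    congr 1
    rw [Finset.mul_sum]
    refine Finset.sum_congr rfl fun a _ => ?_
    rw [Finset.mul_sum]
    refine Finset.sum_congr rfl fun b _ => ?_
    ring
  -- rewriting the continuous error
  have hIntab : ∀ a b, IntegrableOn (φab a b) K volume :=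
    fun a b => (hφabcont a b).continuousOn.integrableOn_compact hKc
  have hInt0 : IntegrableOn φ0 K volume := hφ0cont.continuousOn.integrableOn_compact hKc
  have hcont : ∀ (W : Matrix (Fin Nh) (Fin N) ℝ), Wᵀ * W = 1 →
      continuousPODError P T u W = I0 - ∑ a, ∑ b, (W * Wᵀ) a b * Iab a b := by
    intro W hW
    unfold continuousPODError
    rw [← hK]
    have hcongr : ∀ z ∈ K, ‖u z - toEuc (W.mulVec (Wᵀ.mulVec (u z)))‖ ^ 2
        = φ0 z - ∑ a, ∑ b, (W * Wᵀ) a b * φab a b z := by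
      intro z hz
      rw [← hgz _ hz]
      exact proj_normsq W hW (g z)
    rw [setIntegral_congr_fun hKmeas hcongr]
    have hintsum : IntegrableOn (fun z => ∑ a, ∑ b, (W * Wᵀ) a b * φab a b z) K volume := by
      refine integrable_finset_sum _ fun a _ => ?_
      refine integrable_finset_sum _ fun b _ => ?_
      exact (hIntab a b).const_mul _
    rw [integral_sub hInt0 hintsum, ← hI0]
    congr 1
    rw [integral_finset_sum _ (fun a _ => by
      refine integrable_finset_sum _ fun b _ => ?_
      exact (hIntab a b).const_mul _)]
    refine Finset.sum_congr rfl fun a _ => ?_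
    rw [integral_finset_sum _ (fun b _ => (hIntab a b).const_mul _)]
    refine Finset.sum_congr rfl fun b _ => ?_
    rw [integral_const_mul]
  -- the key uniform bound
  have hEC : ∀ (n : ℕ) (W : Matrix (Fin Nh) (Fin N) ℝ), Wᵀ * W = 1 →
      |empiricalPODError P T u (fun j => μ j ω) n W - continuousPODError P T u W| ≤ E n := by
    intro n W hW
    rw [hemp n W hW, hcont W hW]
    have hre : (S φ0 n - ∑ a, ∑ b, (W * Wᵀ) a b * S (φab a b) n)
        - (I0 - ∑ a, ∑ b, (W * Wᵀ) a b * Iab a b)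
        = (S φ0 n - I0) - ∑ a, ∑ b, (W * Wᵀ) a b * (S (φab a b) n - Iab a b) := by
      simp only [mul_sub, Finset.sum_sub_distrib]
      ring
    have hstep1 : |∑ a, ∑ b, (W * Wᵀ) a b * (S (φab a b) n - Iab a b)|
        ≤ ∑ a, ∑ b, |S (φab a b) n - Iab a b| := by
      calc |∑ a, ∑ b, (W * Wᵀ) a b * (S (φab a b) n - Iab a b)|
          ≤ ∑ a, |∑ b, (W * Wᵀ) a b * (S (φab a b) n - Iab a b)| :=
            Finset.abs_sum_le_sum_abs _ _
      _ ≤ ∑ a, ∑ b, |(W * Wᵀ) a b * (S (φab a b) n - Iab a b)| :=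
            Finset.sum_le_sum fun a _ => Finset.abs_sum_le_sum_abs _ _
      _ ≤ ∑ a, ∑ b, |S (φab a b) n - Iab a b| := by
            refine Finset.sum_le_sum fun a _ => Finset.sum_le_sum fun b _ => ?_
            rw [abs_mul]
            exact mul_le_of_le_one_left (abs_nonneg _) (proj_entry_le W hW a b)
    have hfinal : |(S φ0 n - I0) - ∑ a, ∑ b, (W * Wᵀ) a b * (S (φab a b) n - Iab a b)|
        ≤ |S φ0 n - I0| + ∑ a, ∑ b, |S (φab a b) n - Iab a b| :=
      le_trans (abs_sub _ _) (add_le_add le_rfl hstep1)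
    rw [hre]
    simpa only [hE] using hfinal
  -- final squeeze
  have hup : ∀ n, empiricalPODError P T u (fun j => μ j ω) n (Vn n ω)
      ≤ continuousPODError P T u Vinf + E n := by
    intro n
    have h1 := hVnmin n ω Vinf hVinf
    have h2 := (abs_le.mp (hEC n Vinf hVinf)).2
    linarith
  have hlo : ∀ n, continuousPODError P T u Vinf - E n
      ≤ empiricalPODError P T u (fun j => μ j ω) n (Vn n ω) := by
    intro n
    have h1 := (abs_le.mp (hEC n (Vn n ω) (hVn n ω))).1
    have h2 := hVinfmin (Vn n ω) (hVn n ω)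
    linarith
  refine tendsto_of_tendsto_of_tendsto_of_le_of_le ?_ ?_ hlo hup
  · have hconst : Tendsto (fun _ : ℕ => continuousPODError P T u Vinf) atTop
        (𝓝 (continuousPODError P T u Vinf)) := tendsto_const_nhds
    have := hconst.sub hE0
    simpa using this
  · have hconst : Tendsto (fun _ : ℕ => continuousPODError P T u Vinf) atTop
        (𝓝 (continuousPODError P T u Vinf)) := tendsto_const_nhds
    have := hconst.add hE0
    simpa using this
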